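/- arXiv:1605.00495 — 10 statements merged into one kernel-verified Lean document; each statement's English description precedes it below -/
import Mathlib

section
/- Generalised attack monotonicity 1: Let S₁ ⊆ 𝒮 be finite and coherent and s ∈ 𝒮 be such that R(S₁,s) is defined. If S₂ ⊆ 𝒮 is finite and coherent, the set of identifiers occurring in S₂ equals the set of identifiers occurring in S₁, and for every (a,n) ∈ S₁ there exists (a,m) ∈ S₂ with n ≤ m, then R(S₂,s) is defined. -/
namespace CoalitionArg

/-- An argument: identifier paired with capacity. -/
abbrev Arg (A : Type*) := A × ℕ

variable {A : Type*}

/-- A coherent set of arguments: finite, positive capacities, and each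
identifier occurs with at most one capacity. -/
def Coherent (S : Set (Arg A)) : Prop :=
  S.Finite ∧ (∀ p ∈ S, 0 < p.2) ∧ ∀ p ∈ S, ∀ q ∈ S, p.1 = q.1 → p.2 = q.2

/-- Attack-strength functions are modelled as `Option ℕ`-valued functions;
`none` means undefined. -/
abbrev AttFun (A : Type*) := Set (Arg A) → Arg A → Option ℕ

/-- `R` is defined at `(T, s)`. -/
def RDef (R : AttFun A) (T : Set (Arg A)) (s : Arg A) : Prop := (R T s).isSome

/-- The eight axioms of an attack-strength function. -/
structure IsAttackStrength (R : AttFun A) : Prop where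
  empty_undef : ∀ s, R ∅ s = none
  subset_def : ∀ S₁ S₂ s, RDef R S₁ s → S₂ ⊆ S₁ → S₂.Nonempty → RDef R S₂ s
  union_def : ∀ S₁ S₂ s, RDef R S₁ s → RDef R S₂ s → RDef R (S₁ ∪ S₂) s
  pos : ∀ S₁ s n, R S₁ s = some n → 0 < n
  mono_source_cap : ∀ S₁ s a n m k, R S₁ s = some k → (a, n) ∈ S₁ → n ≤ m →
      ∃ k', R ((S₁ \ {(a, n)}) ∪ {(a, m)}) s = some k' ∧ k ≤ k'
  mono_source_inter : ∀ S₁ S₂ s k₁ k₂ k, R S₁ s = some k₁ → R S₂ s = some k₂ →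
      R (S₁ ∩ S₂) s = some k → k ≤ k₁ ∧ k ≤ k₂
  mono_target : ∀ S₁ a n m k, R S₁ (a, n) = some k → (∀ p ∈ S₁, p.1 ≠ a) → n ≤ m →
      ∃ k', R S₁ (a, m) = some k' ∧ k ≤ k'
  no_self : ∀ S₁ s, s ∈ S₁ → R S₁ s = none

/-- Attack-strength axioms without (2) quasi-closure by subsets and
(3) closure by union (for the restricted framework). -/
structure IsAttackStrengthRestr (R : AttFun A) : Prop where
  empty_undef : ∀ s, R ∅ s = none
  pos : ∀ S₁ s n, R S₁ s = some n → 0 < n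
  mono_source_cap : ∀ S₁ s a n m k, R S₁ s = some k → (a, n) ∈ S₁ → n ≤ m →
      ∃ k', R ((S₁ \ {(a, n)}) ∪ {(a, m)}) s = some k' ∧ k ≤ k'
  mono_source_inter : ∀ S₁ S₂ s k₁ k₂ k, R S₁ s = some k₁ → R S₂ s = some k₂ →
      R (S₁ ∩ S₂) s = some k → k ≤ k₁ ∧ k ≤ k₂
  mono_target : ∀ S₁ a n m k, R S₁ (a, n) = some k → (∀ p ∈ S₁, p.1 ≠ a) → n ≤ m →
      ∃ k', R S₁ (a, m) = some k' ∧ k ≤ k'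
  no_self : ∀ S₁ s, s ∈ S₁ → R S₁ s = none

/-- An argumentation framework: a coherent set together with an
attack-strength function. -/
structure AF (A : Type*) where
  args : Set (Arg A)
  att : AttFun A
  coherent : Coherent args
  isAtt : IsAttackStrength att

/-- `S₁` attacks `s`. -/
def Attacks (R : AttFun A) (S₁ : Set (Arg A)) (s : Arg A) : Prop :=
  ∃ S₂ ⊆ S₁, RDef R S₂ s

/-- `S₁` defeats `s`: it attacks `s`, and the maximum attack strength over
subsets of `S₁` reaches the capacity of `s`. -/
def Defeats (R : AttFun A) (S₁ : Set (Arg A)) (s : Arg A) : Prop :=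
  Attacks R S₁ s ∧ ∃ S₂ ⊆ S₁, ∃ n, R S₂ s = some n ∧
    (∀ Sx ⊆ S₁, ∀ m, R Sx s = some m → m ≤ n) ∧ s.2 ≤ n

/-- Maximum attack strength of `S₁` on `s` (0 when `S₁` does not attack `s`). -/
noncomputable def Vmax (R : AttFun A) (S₁ : Set (Arg A)) (s : Arg A) : ℕ :=
  sSup {n | ∃ S₂ ⊆ S₁, R S₂ s = some n}

/-- Conflict-eliminability: no member is defeated by the set itself.
(`α` is defined exactly on conflict-eliminable sets.) -/
def ConfElim (R : AttFun A) (S₁ : Set (Arg A)) : Prop := ∀ s ∈ S₁, ¬ Defeats R S₁ s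

/-- The intrinsic arguments of `S₁`. -/
noncomputable def alpha (R : AttFun A) (S₁ : Set (Arg A)) : Set (Arg A) :=
  (fun s => (s.1, s.2 - Vmax R S₁ s)) '' S₁

/-- The attacks occurring inside `S₁`. -/
def Del (R : AttFun A) (S₁ : Set (Arg A)) : Set (Set (Arg A) × Arg A) :=
  {p | p.2 ∈ S₁ ∧ p.1 ⊆ S₁ ∧ RDef R p.1 p.2}

open Classical in
/-- The attack-strength function of the view of `S₁`: `R` restricted off
`Del R S₁`. -/
noncomputable def viewAtt (R : AttFun A) (S₁ : Set (Arg A)) : AttFun A :=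
  fun T s => if (T, s) ∈ Del R S₁ then none else R T s

/-- The argument set of the view of `S₁` about `S`. -/
noncomputable def viewArgs (R : AttFun A) (S S₁ : Set (Arg A)) : Set (Arg A) :=
  (S \ S₁) ∪ alpha R S₁

/-- `S₁` c-attacks `s`. -/
def CAttacks (R : AttFun A) (S₁ : Set (Arg A)) (s : Arg A) : Prop :=
  ConfElim R S₁ ∧ ∃ S₂ ⊆ alpha R S₁, RDef (viewAtt R S₁) S₂ s

/-- `S₁` c-defeats `s`. -/
def CDefeats (R : AttFun A) (S₁ : Set (Arg A)) (s : Arg A) : Prop :=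
  CAttacks R S₁ s ∧ ∃ S₃ ⊆ alpha R S₁, ∃ n, viewAtt R S₁ S₃ s = some n ∧ s.2 ≤ n

/-- c-admissibility of `S₁ ⊆ S`. -/
def CAdmissible (R : AttFun A) (S S₁ : Set (Arg A)) : Prop :=
  ConfElim R S₁ ∧
  ∀ S₂ ⊆ viewArgs R S S₁, ∀ s ∈ S₁, Attacks R S₂ s →
    ∀ Sx ⊆ S₂, RDef R Sx s → ∃ sx ∈ Sx, CDefeats R S₁ sx

/-- c-preferredness of `S₁ ⊆ S`. -/
def CPreferred (R : AttFun A) (S S₁ : Set (Arg A)) : Prop :=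
  CAdmissible R S S₁ ∧ ¬ ∃ Sy, S₁ ⊂ Sy ∧ Sy ⊆ S ∧ CAdmissible R S Sy

/-- `S₁` is one-directionally attacked. -/
def OneDirAttacked (R : AttFun A) (S S₁ : Set (Arg A)) : Prop :=
  ConfElim R S₁ ∧ ∃ Sx ⊆ viewArgs R S S₁, (∃ s ∈ S₁, Attacks R Sx s) ∧
    ∀ sx ∈ Sx, ¬ CAttacks R S₁ sx

/-- The states relation `S₁ ≼ S₂`. -/
def StateLeq (R : AttFun A) (S S₁ S₂ : Set (Arg A)) : Prop :=
  ConfElim R S₁ ∧ ConfElim R S₂ ∧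
  (CAdmissible R S S₂ ∨ OneDirAttacked R S S₁ ∨
    (¬ CAdmissible R S S₁ ∧ ¬ CAdmissible R S S₂ ∧
     ¬ OneDirAttacked R S S₁ ∧ ¬ OneDirAttacked R S S₂))

/-- Coalition permission. -/
def CoalitionPermitted (R : AttFun A) (S₁ S₂ : Set (Arg A)) : Prop :=
  S₁ ∩ S₂ = ∅ ∧ ConfElim R (S₁ ∪ S₂)

/-- The attackers of `S₁` within `S`. -/
def Attacker (R : AttFun A) (S S₁ : Set (Arg A)) : Set (Arg A) :=
  {s ∈ S | ∃ s₁ ∈ S₁, Attacks R {s} s₁}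

/-- Attackers of `S₁` that `Sx` neither c-defeats nor contains. -/
def UndefAtt (R : AttFun A) (S S₁ Sx : Set (Arg A)) : Set (Arg A) :=
  {s ∈ Attacker R S S₁ | ¬ CDefeats R Sx s ∧ s ∉ Sx}

/-- The (fewer attackers) axiom for the pair `(S₁, S₂)`. -/
noncomputable def FewerAttackers (R : AttFun A) (S S₁ S₂ : Set (Arg A)) : Prop :=
  (UndefAtt R S S₁ S₂).ncard ≤ (UndefAtt R S S₁ S₁).ncard

/-- Coalition profitability `S₁ ⊴ S₂`. -/
noncomputable def Profitable (R : AttFun A) (S S₁ S₂ : Set (Arg A)) : Prop :=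
  S₁ ⊆ S₂ ∧ StateLeq R S S₁ S₂ ∧ FewerAttackers R S S₁ S₂

/-- `Max(S₁)`: maximal profitable extensions of `S₁` within `S`. -/
noncomputable def MaxSet (R : AttFun A) (S S₁ : Set (Arg A)) : Set (Set (Arg A)) :=
  {Sx | Sx ⊆ S ∧ Profitable R S S₁ Sx ∧
    ∀ Sy, Sx ⊂ Sy → Sy ⊆ S → ¬ Profitable R S S₁ Sy}

open Classical in
/-- State rank: 2 for c-admissible, 0 for one-directionally attacked, 1 otherwise. -/
noncomputable def stateRank (R : AttFun A) (S S₁ : Set (Arg A)) : ℕ :=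
  if CAdmissible R S S₁ then 2 else if OneDirAttacked R S S₁ then 0 else 1

/-- Number of external undefeated attackers of `Sx`. -/
noncomputable def extAttCount (R : AttFun A) (S Sx : Set (Arg A)) : ℕ :=
  (UndefAtt R S Sx Sx).ncard

/-- The three comparison criteria: set size, state, external attackers. -/
inductive Crit | l | b | f

/-- `≤_β` for `β ∈ {l, b, f}`. -/
noncomputable def critLe (R : AttFun A) (S : Set (Arg A)) :
    Crit → Set (Arg A) → Set (Arg A) → Prop
  | .l, S₁, S₂ => S₁.ncard ≤ S₂.ncard
  | .b, S₁, S₂ => stateRank R S S₁ ≤ stateRank R S S₂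
  | .f, S₁, S₂ => extAttCount R S S₂ ≤ extAttCount R S S₁

/-- `<_β`. -/
noncomputable def critLt (R : AttFun A) (S : Set (Arg A))
    (c : Crit) (S₁ S₂ : Set (Arg A)) : Prop :=
  critLe R S c S₁ S₂ ∧ ¬ critLe R S c S₂ S₁

/-- Maximal profitability `S₁ ⊴_m S₂`. -/
noncomputable def ProfitableM (R : AttFun A) (S S₁ S₂ : Set (Arg A)) : Prop :=
  Profitable R S S₁ S₂ ∧ ∃ Sx ∈ MaxSet R S S₂, ∀ Sy ∈ MaxSet R S S₁,
    ∀ β : Crit, critLt R S β Sx Sy → ∃ γ : Crit, γ ≠ β ∧ critLt R S γ Sy Sx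

/-- The coalition formability semantics `W`. -/
noncomputable def Wsem (R : AttFun A) (S S₁ : Set (Arg A)) : Set (Set (Arg A)) :=
  {S₂ | S₂ ⊆ S ∧ (Profitable R S S₁ (S₁ ∪ S₂) ∨ Profitable R S S₂ (S₁ ∪ S₂))}

/-- The coalition formability semantics `M`. -/
noncomputable def Msem (R : AttFun A) (S S₁ : Set (Arg A)) : Set (Set (Arg A)) :=
  {S₂ | S₂ ⊆ S ∧ Profitable R S S₁ (S₁ ∪ S₂) ∧ Profitable R S S₂ (S₁ ∪ S₂)}

/-- The coalition formability semantics `WS`. -/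
noncomputable def WSsem (R : AttFun A) (S S₁ : Set (Arg A)) : Set (Set (Arg A)) :=
  {S₂ | S₂ ⊆ S ∧ (ProfitableM R S S₁ (S₁ ∪ S₂) ∨ ProfitableM R S S₂ (S₁ ∪ S₂))}

/-- The coalition formability semantics `S`. -/
noncomputable def Ssem (R : AttFun A) (S S₁ : Set (Arg A)) : Set (Set (Arg A)) :=
  {S₂ | S₂ ⊆ S ∧ ProfitableM R S S₁ (S₁ ∪ S₂) ∧ ProfitableM R S S₂ (S₁ ∪ S₂)}

/-- Weak continuity of `⊴` for `S₁`. -/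
noncomputable def WeaklyContinuous (R : AttFun A) (S S₁ : Set (Arg A)) : Prop :=
  ∃ Sz ∈ MaxSet R S S₁, ∀ Sw ⊆ Sz,
    CoalitionPermitted R S₁ (Sw \ S₁) → Profitable R S S₁ Sw

/-! Nielsen–Parsons argumentation frameworks. -/

/-- `A₁` NP-attacks `a` in the NP framework with attack relation `G`. -/
def NPattacks (G : Set (Set (Arg A) × Arg A)) (A₁ : Set (Arg A)) (a : Arg A) : Prop :=
  ∃ A' ⊆ A₁, (A', a) ∈ G

/-- `(Ax, a) ∈ G` is minimal. -/
def NPminimal (G : Set (Set (Arg A) × Arg A)) (Ax : Set (Arg A)) (a : Arg A) : Prop :=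
  (Ax, a) ∈ G ∧ ∀ A'', A'' ⊂ Ax → (A'', a) ∉ G

/-- NP-conflict-freeness. -/
def NPconflictFree (G : Set (Set (Arg A) × Arg A)) (A₁ : Set (Arg A)) : Prop :=
  ∀ a ∈ A₁, ¬ NPattacks G A₁ a

/-- `A₁` NP-defends `a` within `S`. -/
def NPdefends (G : Set (Set (Arg A) × Arg A)) (S A₁ : Set (Arg A)) (a : Arg A) : Prop :=
  ∀ Ax ⊆ S, NPminimal G Ax a → ∃ ax ∈ Ax, NPattacks G A₁ ax

/-- NP-admissibility. -/
def NPadmissible (G : Set (Set (Arg A) × Arg A)) (S A₁ : Set (Arg A)) : Prop :=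
  A₁ ⊆ S ∧ NPconflictFree G A₁ ∧ ∀ a ∈ A₁, NPdefends G S A₁ a

/-- NP-preferredness. -/
def NPpreferred (G : Set (Set (Arg A) × Arg A)) (S A₁ : Set (Arg A)) : Prop :=
  NPadmissible G S A₁ ∧ ¬ ∃ A₂, A₁ ⊂ A₂ ∧ A₂ ⊆ S ∧ NPadmissible G S A₂

/-- `(S, G)` is a Nielsen–Parsons argumentation framework. -/
def IsNPFramework (S : Set (Arg A)) (G : Set (Set (Arg A) × Arg A)) : Prop :=
  S.Finite ∧ ∀ p ∈ G, p.1.Nonempty ∧ p.1 ⊆ S ∧ p.2 ∈ S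

end CoalitionArg
open CoalitionArg in
/-- Generalised attack monotonicity 1. -/
theorem generalised_attack_monotonicity {A : Type*} (R : AttFun A)
    (hR : IsAttackStrength R) (S₁ S₂ : Set (Arg A)) (s : Arg A)
    (h₁ : Coherent S₁) (h₂ : Coherent S₂)
    (hdef : RDef R S₁ s)
    (hids : Prod.fst '' S₁ = Prod.fst '' S₂)
    (hcap : ∀ p ∈ S₁, ∃ m, p.2 ≤ m ∧ (p.1, m) ∈ S₂) :
    RDef R S₂ s := by
  classical
  -- the replacement function
  set g : Arg A → Arg A := fun p =>
    (p.1, if h : ∃ m, p.2 ≤ m ∧ (p.1, m) ∈ S₂ then h.choose else p.2) with hg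
  have hg_mem : ∀ p ∈ S₁, g p ∈ S₂ ∧ p.2 ≤ (g p).2 := by
    intro p hp
    have h := hcap p hp
    simp only [hg, dif_pos h]
    exact ⟨h.choose_spec.2, h.choose_spec.1⟩
  have hg_fst : ∀ p, (g p).1 = p.1 := fun p => rfl
  -- main induction: replacing elements of a subset F keeps definedness
  have key : ∀ F : Set (Arg A), F.Finite → F ⊆ S₁ → RDef R ((S₁ \ F) ∪ g '' F) s := by
    intro F hF
    refine Set.Finite.induction_on_subset (motive := fun F _ => F ⊆ S₁ → RDef R ((S₁ \ F) ∪ g '' F) s) F hF (fun _ => by simpa using hdef) ?_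
    intro p F' hpF' hF'sub hpnot ih hFS
    have hpS₁ : p ∈ S₁ := hFS (Set.mem_insert _ _)
    have hF'S : F' ⊆ S₁ := fun x hx => hFS (Set.mem_insert_of_mem _ hx)
    have ihdef := ih hF'S
    set T := (S₁ \ F') ∪ g '' F' with hT
    have hpT : p ∈ T := Or.inl ⟨hpS₁, hpnot⟩
    obtain ⟨k, hk⟩ := Option.isSome_iff_exists.mp ihdef
    obtain ⟨k', hk', _⟩ :=
      hR.mono_source_cap T s p.1 p.2 (g p).2 k hk hpT (hg_mem p hpS₁).2
    have hset : (T \ {(p.1, p.2)}) ∪ {(p.1, (g p).2)} =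
        (S₁ \ insert p F') ∪ g '' insert p F' := by
      have hpg : p ∉ g '' F' := by
        rintro ⟨q, hq, hgq⟩
        have hq1 : q.1 = p.1 := by rw [← hg_fst q, hgq]
        have hq2 : q.2 = p.2 := h₁.2.2 q (hF'S hq) p hpS₁ hq1
        have : q = p := Prod.ext hq1 hq2
        exact hpnot (this ▸ hq)
      ext x
      simp only [hT, Set.mem_union, Set.mem_diff, Set.mem_singleton_iff,
        Set.mem_insert_iff, Set.mem_image]
      constructor
      · rintro (⟨(⟨hx1, hx2⟩ | ⟨q, hq, hgq⟩), hxp⟩ | hx)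
        · exact Or.inl ⟨hx1, fun h => h.elim (fun h => hxp (by simpa using h)) hx2⟩
        · exact Or.inr ⟨q, Or.inr hq, hgq⟩
        · refine Or.inr ⟨p, Or.inl rfl, ?_⟩
          cases x with
          | mk a b => simp only [Set.mem_singleton_iff, Prod.mk.injEq] at hx
                      exact Prod.ext hx.1.symm hx.2.symm
      · rintro (⟨hx1, hx2⟩ | ⟨q, (rfl | hq), hgq⟩)
        · exact Or.inl ⟨Or.inl ⟨hx1, fun h => hx2 (Or.inr h)⟩,
            fun h => hx2 (Or.inl (by simpa using h))⟩
        · exact Or.inr (by simp [← hgq, hg])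
        · refine Or.inl ⟨Or.inr ⟨q, hq, hgq⟩, ?_⟩
          intro h
          apply hpg
          refine ⟨q, hq, ?_⟩
          rw [hgq]
          simpa using h
    have hfin : R (S₁ \ insert p F' ∪ g '' insert p F') s = some k' := hset ▸ hk'
    simp [RDef, hfin]
  have hfin := key S₁ h₁.1 (le_refl _)
  have himg : g '' S₁ = S₂ := by
    apply Set.Subset.antisymm
    · rintro x ⟨p, hp, rfl⟩
      exact (hg_mem p hp).1
    · intro q hq
      have : q.1 ∈ Prod.fst '' S₁ := hids ▸ ⟨q, hq, rfl⟩
      obtain ⟨p, hp, hp1⟩ := this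
      have hgp : g p ∈ S₂ := (hg_mem p hp).1
      have h1 : (g p).1 = q.1 := by rw [hg_fst]; exact hp1
      have h2 : (g p).2 = q.2 := h₂.2.2 _ hgp q hq h1
      exact ⟨p, hp, Prod.ext h1 h2⟩
  simpa [himg] using hfin
end

section
/- In the restricted framework (S,R↓), if α is defined for S₁ ⊆ S, then α(S₁) = S₁ and π₁(View_{R↓}(S,S₁)) = S. -/
open CoalitionArg in
/-- In the restricted framework, `α(S₁) = S₁` and the view's argument set is `S`. -/
theorem restricted_alpha_eq {A : Type*}
    (R : AttFun A) (S : Set (Arg A))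
    (hcoh : Coherent S) (hR : IsAttackStrengthRestr R)
    (hdefeat : ∀ S₁ ⊆ S, ∀ s ∈ S, Attacks R S₁ s → Defeats R S₁ s) :
    ∀ S₁ ⊆ S, ConfElim R S₁ →
      alpha R S₁ = S₁ ∧ viewArgs R S S₁ = S := by
  intro S₁ hS₁ hce
  have hV : ∀ s ∈ S₁, Vmax R S₁ s = 0 := by
    intro s hs
    have hempty : {n | ∃ S₂ ⊆ S₁, R S₂ s = some n} = ∅ := by
      ext n
      simp only [Set.mem_setOf_eq, Set.mem_empty_iff_false, iff_false]
      rintro ⟨S₂, hsub, hsome⟩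
      have hatt : Attacks R S₁ s := ⟨S₂, hsub, by simp [RDef, hsome]⟩
      exact hce s hs (hdefeat S₁ hS₁ s (hS₁ hs) hatt)
    simp [Vmax, hempty]
  have halpha : alpha R S₁ = S₁ := by
    ext p
    constructor
    · rintro ⟨q, hq, rfl⟩
      simpa [hV q hq] using hq
    · intro hp
      exact ⟨p, hp, by simp [hV p hp]⟩
  refine ⟨halpha, ?_⟩
  rw [viewArgs, halpha, Set.diff_union_of_subset hS₁]
end

section
/- In the restricted framework (S,R↓): every c-attack is an attack, i.e. if S₁ ⊆ S c-attacks s ∈ S then S₁ attacks s; and every c-attack is a c-defeat, i.e. if S₁ ⊆ S c-attacks s ∈ S then S₁ c-defeats s. -/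
open CoalitionArg in
/-- In the restricted framework, every c-attack is an attack and every c-attack
is a c-defeat. -/
theorem restricted_cattack_attack_cdefeat {A : Type*}
    (R : AttFun A) (S : Set (Arg A))
    (hcoh : Coherent S) (hR : IsAttackStrengthRestr R)
    (hdefeat : ∀ S₁ ⊆ S, ∀ s ∈ S, Attacks R S₁ s → Defeats R S₁ s) :
    (∀ S₁ ⊆ S, ∀ s ∈ S, CAttacks R S₁ s → Attacks R S₁ s) ∧
    (∀ S₁ ⊆ S, ∀ s ∈ S, CAttacks R S₁ s → CDefeats R S₁ s) := by
  have key : ∀ S₁ ⊆ S, ConfElim R S₁ → alpha R S₁ = S₁ := by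
    intro S₁ hS₁ hce
    have hV : ∀ s ∈ S₁, Vmax R S₁ s = 0 := by
      intro s hs
      have hempty : {n | ∃ S₂ ⊆ S₁, R S₂ s = some n} = ∅ := by
        ext n
        simp only [Set.mem_setOf_eq, Set.mem_empty_iff_false, iff_false]
        rintro ⟨S₂, hsub, hn⟩
        exact hce s hs (hdefeat S₁ hS₁ s (hS₁ hs)
          ⟨S₂, hsub, by simp [RDef, hn]⟩)
      simp [Vmax, hempty]
    ext p
    constructor
    · rintro ⟨q, hq, rfl⟩
      simpa [hV q hq] using hq
    · intro hp
      exact ⟨p, hp, by simp [hV p hp]⟩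
  have hatt : ∀ S₁ ⊆ S, ∀ s ∈ S, CAttacks R S₁ s → Attacks R S₁ s := by
    rintro S₁ hS₁ s hsS ⟨hce, S₂, hsub, hdef⟩
    rw [key S₁ hS₁ hce] at hsub
    refine ⟨S₂, hsub, ?_⟩
    by_cases h : (S₂, s) ∈ Del R S₁
    · simp [RDef, viewAtt, h] at hdef
    · simpa [RDef, viewAtt, h] using hdef
  refine ⟨hatt, ?_⟩
  intro S₁ hS₁ s hsS hca
  have hce := hca.1
  have hA := hatt S₁ hS₁ s hsS hca
  obtain ⟨_, S₃, hsub, n, hn, _, hle⟩ := hdefeat S₁ hS₁ s hsS hA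
  have hns : s ∉ S₁ := fun hs => hce s hs (hdefeat S₁ hS₁ s hsS hA)
  refine ⟨hca, S₃, by rw [key S₁ hS₁ hce]; exact hsub, n, ?_, hle⟩
  have hdel : (S₃, s) ∉ Del R S₁ := fun h => hns h.1
  simpa [viewAtt, hdel] using hn
end

section
/- In the restricted framework (S,R↓), let G = {(S₂,s) : S₂ ⊆ S, s ∈ S, R↓(S₂,s) is defined}. Then (S,G) is a Nielsen–Parsons argumentation framework, every c-admissible subset of S is NP-admissible in (S,G), and every c-preferred subset of S is NP-preferred in (S,G). -/
open CoalitionArg in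
/-- The restricted framework is a Nielsen–Parsons framework; c-admissible sets
are NP-admissible and c-preferred sets are NP-preferred. -/
theorem restricted_is_NP {A : Type*}
    (R : AttFun A) (S : Set (Arg A))
    (hcoh : Coherent S) (hR : IsAttackStrengthRestr R)
    (hdefeat : ∀ S₁ ⊆ S, ∀ s ∈ S, Attacks R S₁ s → Defeats R S₁ s) :
    IsNPFramework S {p : Set (Arg A) × Arg A | p.1 ⊆ S ∧ p.2 ∈ S ∧ RDef R p.1 p.2} ∧
    (∀ S₁ ⊆ S, CAdmissible R S S₁ →
      NPadmissible {p : Set (Arg A) × Arg A | p.1 ⊆ S ∧ p.2 ∈ S ∧ RDef R p.1 p.2} S S₁) ∧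
    (∀ S₁ ⊆ S, CPreferred R S S₁ →
      NPpreferred {p : Set (Arg A) × Arg A | p.1 ⊆ S ∧ p.2 ∈ S ∧ RDef R p.1 p.2} S S₁) := by
  set G : Set (Set (Arg A) × Arg A) :=
    {p : Set (Arg A) × Arg A | p.1 ⊆ S ∧ p.2 ∈ S ∧ RDef R p.1 p.2} with hG
  -- no attacks inside a conflict-eliminable subset of S
  have noInner : ∀ S₁ ⊆ S, ConfElim R S₁ → ∀ s ∈ S₁, ∀ T ⊆ S₁, ¬ RDef R T s := by
    intro S₁ hS₁ hce s hs T hT hdef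
    exact hce s hs (hdefeat S₁ hS₁ s (hS₁ hs) ⟨T, hT, hdef⟩)
  have vmax0 : ∀ S₁ ⊆ S, ConfElim R S₁ → ∀ s ∈ S₁, Vmax R S₁ s = 0 := by
    intro S₁ hS₁ hce s hs
    have hempty : {n | ∃ S₂ ⊆ S₁, R S₂ s = some n} = ∅ := by
      ext n
      simp only [Set.mem_setOf_eq, Set.mem_empty_iff_false, iff_false]
      rintro ⟨S₂, hS₂, hR'⟩
      exact noInner S₁ hS₁ hce s hs S₂ hS₂ (by rw [RDef, hR']; rfl)
    rw [Vmax, hempty]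
    exact csSup_empty
  have alphaEq : ∀ S₁ ⊆ S, ConfElim R S₁ → alpha R S₁ = S₁ := by
    intro S₁ hS₁ hce
    unfold alpha
    ext p
    constructor
    · rintro ⟨s, hs, rfl⟩
      show (s.1, s.2 - Vmax R S₁ s) ∈ S₁
      rw [vmax0 S₁ hS₁ hce s hs]
      simpa using hs
    · intro hp
      refine ⟨p, hp, ?_⟩
      show (p.1, p.2 - Vmax R S₁ p) = p
      rw [vmax0 S₁ hS₁ hce p hp]
      simp
  have viewAttEq : ∀ S₁ ⊆ S, ConfElim R S₁ → ∀ T s, viewAtt R S₁ T s = R T s := by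
    intro S₁ hS₁ hce T s
    rw [viewAtt]
    split_ifs with h
    · exact absurd h.2.2 (noInner S₁ hS₁ hce s h.1 T h.2.1)
    · rfl
  have viewArgsEq : ∀ S₁ ⊆ S, ConfElim R S₁ → viewArgs R S S₁ = S := by
    intro S₁ hS₁ hce
    rw [viewArgs, alphaEq S₁ hS₁ hce, Set.diff_union_of_subset hS₁]
  -- c-admissible → NP-admissible
  have cadm_np : ∀ S₁ ⊆ S, CAdmissible R S S₁ → NPadmissible G S S₁ := by
    intro S₁ hS₁ hcadm
    obtain ⟨hce, hdef⟩ := hcadm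
    refine ⟨hS₁, ?_, ?_⟩
    · rintro a ha ⟨A', hA', hGm⟩
      exact noInner S₁ hS₁ hce a ha A' hA' hGm.2.2
    · intro a ha Ax hAxS hmin
      obtain ⟨hGm, _⟩ := hmin
      obtain ⟨hAxS', haS, hRdef⟩ := hGm
      have hview : Ax ⊆ viewArgs R S S₁ := by
        rw [viewArgsEq S₁ hS₁ hce]; exact hAxS
      obtain ⟨sx, hsx, hcdef⟩ :=
        hdef Ax hview a ha ⟨Ax, subset_rfl, hRdef⟩ Ax subset_rfl hRdef
      obtain ⟨_, S₃, hS₃, n, hRn, _⟩ := hcdef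
      rw [viewAttEq S₁ hS₁ hce] at hRn
      rw [alphaEq S₁ hS₁ hce] at hS₃
      refine ⟨sx, hsx, S₃, hS₃, ⟨hS₃.trans hS₁, hAxS hsx, ?_⟩⟩
      rw [RDef, hRn]; rfl
  -- NP-admissible → c-admissible
  have npadm_cadm : ∀ A₂, NPadmissible G S A₂ → CAdmissible R S A₂ := by
    rintro A₂ ⟨hA₂S, hcf, hdefd⟩
    have hce : ConfElim R A₂ := by
      rintro s hs ⟨⟨S₂, hS₂, hdef2⟩, -⟩
      exact hcf s hs ⟨S₂, hS₂, hS₂.trans hA₂S, hA₂S hs, hdef2⟩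
    refine ⟨hce, ?_⟩
    intro S₂ hS₂view s hs hatt Sx hSx hSxdef
    rw [viewArgsEq A₂ hA₂S hce] at hS₂view
    have hSxS : Sx ⊆ S := hSx.trans hS₂view
    -- find a minimal attacking subset of Sx
    have hTfin : {T : Set (Arg A) | T ⊆ Sx ∧ RDef R T s}.Finite :=
      ((hcoh.1.subset hSxS).finite_subsets).subset (fun T hT => hT.1)
    have hTne : {T : Set (Arg A) | T ⊆ Sx ∧ RDef R T s}.Nonempty :=
      ⟨Sx, subset_rfl, hSxdef⟩
    obtain ⟨Ax, hAxmem, hAxmin'⟩ := hTfin.exists_minimal hTne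
    have hAxmin : ∀ a' ∈ {T : Set (Arg A) | T ⊆ Sx ∧ RDef R T s}, a' ≤ Ax → Ax = a' :=
      fun a' ha' h => le_antisymm (hAxmin' ha' h) h
    obtain ⟨hAxSx, hAxdef⟩ := hAxmem
    have hmin : NPminimal G Ax s := by
      refine ⟨⟨hAxSx.trans hSxS, hA₂S (hs), hAxdef⟩, ?_⟩
      intro A'' hA'' hGm
      have : A'' ∈ {T : Set (Arg A) | T ⊆ Sx ∧ RDef R T s} :=
        ⟨(hA''.subset).trans hAxSx, hGm.2.2⟩
      have := hAxmin A'' this hA''.subset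
      exact absurd this.symm hA''.ne
    obtain ⟨ax, hax, A', hA', hGm'⟩ :=
      hdefd s hs Ax (hAxSx.trans hSxS) hmin
    -- A₂ attacks ax, hence defeats it
    have haxS : ax ∈ S := hAxSx.trans hSxS hax
    obtain ⟨-, T, hT, n, hRn, -, hcap⟩ :=
      hdefeat A₂ hA₂S ax haxS ⟨A', hA', hGm'.2.2⟩
    refine ⟨ax, hAxSx hax, ?_, ?_⟩
    · refine ⟨hce, T, ?_, ?_⟩
      · rw [alphaEq A₂ hA₂S hce]; exact hT
      · rw [RDef, viewAttEq A₂ hA₂S hce, hRn]; rfl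
    · refine ⟨T, ?_, n, ?_, hcap⟩
      · rw [alphaEq A₂ hA₂S hce]; exact hT
      · rw [viewAttEq A₂ hA₂S hce]; exact hRn
  refine ⟨⟨hcoh.1, ?_⟩, cadm_np, ?_⟩
  · rintro p ⟨hp1, hp2, hp3⟩
    refine ⟨?_, hp1, hp2⟩
    rcases Set.eq_empty_or_nonempty p.1 with h | h
    · rw [h] at hp3
      rw [RDef, hR.empty_undef] at hp3
      exact absurd hp3 (by simp)
    · exact h
  · rintro S₁ hS₁ ⟨hcadm, hnosup⟩
    refine ⟨cadm_np S₁ hS₁ hcadm, ?_⟩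
    rintro ⟨A₂, hsub, hA₂S, hnpadm⟩
    exact hnosup ⟨A₂, hsub, hA₂S, npadm_cadm A₂ hnpadm⟩
end

section
/- Defeats are unresolvable: For any argumentation framework (S,R), any S₁ ⊆ S and any s ∈ S₁, if S₁ defeats s, then every S₂ with S₁ ⊆ S₂ ⊆ S also defeats s. -/
open CoalitionArg in
/-- Defeats are unresolvable. -/
theorem defeats_unresolvable {A : Type*} (F : AF A)
    (S₁ S₂ : Set (Arg A)) (s : Arg A)
    (h₁₂ : S₁ ⊆ S₂) (h₂ : S₂ ⊆ F.args) (hs : s ∈ S₁)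
    (hd : Defeats F.att S₁ s) :
    Defeats F.att S₂ s := by
  obtain ⟨⟨T, hT, hTdef⟩, T₀, hT₀, n₀, hRn₀, hmax, hcap⟩ := hd
  refine ⟨⟨T, hT.trans h₁₂, hTdef⟩, ?_⟩
  set V : Set ℕ := {n | ∃ T ⊆ S₂, F.att T s = some n} with hV
  have hne : n₀ ∈ V := ⟨T₀, hT₀.trans h₁₂, hRn₀⟩
  have hfin : V.Finite := by
    have hS₂fin : S₂.Finite := F.coherent.1.subset h₂
    have : V ⊆ (fun T => (F.att T s).getD 0) '' {T | T ⊆ S₂} := by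
      rintro n ⟨T', hT', hT'def⟩
      exact ⟨T', hT', by simp [hT'def]⟩
    exact (hS₂fin.finite_subsets.image _).subset this
  obtain ⟨m, hmV, hmmax⟩ : ∃ m ∈ V, ∀ k ∈ V, id m ≤ id k → id m = id k := by
    obtain ⟨m, hm⟩ := hfin.exists_maximal ⟨n₀, hne⟩
    exact ⟨m, hm.prop, fun k hk hmk => le_antisymm hmk (hm.2 hk hmk)⟩
  obtain ⟨Tm, hTm, hRm⟩ := hmV
  have hle : ∀ Sx ⊆ S₂, ∀ k, F.att Sx s = some k → k ≤ m := by
    intro Sx hSx k hk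
    have hkV : k ∈ V := ⟨Sx, hSx, hk⟩
    rcases le_or_gt k m with h | h
    · exact h
    · exact absurd (hmmax k hkV h.le) (by simpa using h.ne)
  exact ⟨Tm, hTm, m, hRm, hle, hcap.trans (hle T₀ (hT₀.trans h₁₂) n₀ hRn₀)⟩
end

section
/- Coalition and conflict-eliminability: For any argumentation framework (S,R), if coalition is permitted between S₁ ⊆ S and S₂ ⊆ S, then α is defined for S₁ and for S₂, i.e. both S₁ and S₂ are conflict-eliminable. -/
namespace CoalitionArg

variable {A : Type*}

/-- If a union is conflict-eliminable and finite, so is each part. -/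
lemma confElim_mono {R : AttFun A} {U T : Set (Arg A)} (hfin : U.Finite)
    (hsub : T ⊆ U) (hCE : ConfElim R U) : ConfElim R T := by
  intro s hs hdef
  obtain ⟨⟨T₀, hT₀, hT₀def⟩, Tm, hTm, n₀, hRn₀, _hmax, hcap⟩ := hdef
  -- consider the set of attack values over subsets of U
  set V : Set ℕ := {n | ∃ Tx ⊆ U, R Tx s = some n} with hV
  have hVfin : V.Finite := by
    have : V ⊆ (fun Tx => (R Tx s).getD 0) '' {Tx | Tx ⊆ U} := by
      rintro n ⟨Tx, hTx, hRTx⟩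
      exact ⟨Tx, hTx, by simp [hRTx]⟩
    exact (hfin.finite_subsets.image _).subset this
  have hn₀V : n₀ ∈ V := ⟨Tm, hTm.trans hsub, hRn₀⟩
  obtain ⟨n, hnV, hnmax⟩ : ∃ n ∈ V, ∀ m ∈ V, id n ≤ id m → id n = id m := by
    obtain ⟨n, hnV, h⟩ := hVfin.exists_maximalFor id V ⟨n₀, hn₀V⟩
    exact ⟨n, hnV, fun m hm hle => le_antisymm hle (h hm hle)⟩
  have hmax : ∀ m ∈ V, m ≤ n := fun m hm =>
    le_of_not_gt fun hlt => absurd (hnmax m hm hlt.le) (Nat.ne_of_lt hlt)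
  obtain ⟨Tn, hTn, hRTn⟩ := hnV
  refine hCE s (hsub hs) ?_
  refine ⟨⟨T₀, hT₀.trans hsub, hT₀def⟩, Tn, hTn, n, hRTn, ?_, ?_⟩
  · exact fun Sx hSx m hRm => hmax m ⟨Sx, hSx, hRm⟩
  · exact hcap.trans (hmax n₀ hn₀V)

end CoalitionArg
open CoalitionArg in
/-- Coalition permission implies conflict-eliminability of both parties. -/
theorem coalition_permitted_confElim {A : Type*} (F : AF A)
    (S₁ S₂ : Set (Arg A)) (h₁ : S₁ ⊆ F.args) (h₂ : S₂ ⊆ F.args)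
    (hperm : CoalitionPermitted F.att S₁ S₂) :
    ConfElim F.att S₁ ∧ ConfElim F.att S₂ := by
  have hfin : (S₁ ∪ S₂).Finite :=
    F.coherent.1.subset (Set.union_subset h₁ h₂)
  exact ⟨confElim_mono hfin Set.subset_union_left hperm.2,
    confElim_mono hfin Set.subset_union_right hperm.2⟩
end

section
/- Independence of the profitability axioms: For each of the three axioms of ⊴ — (larger set), (better state) and (fewer attackers) — there exists an argumentation framework (S,R) and subsets S₁, S₂ ⊆ S, with α defined for both, such that the pair (S₁,S₂) satisfies that axiom but satisfies neither of the other two. -/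
namespace IndepAux
open CoalitionArg

def edge7 : ℕ → ℕ → Prop := fun i j =>
  (i = 1 ∧ j = 0) ∨ (i = 2 ∧ j = 0) ∨ (i = 3 ∧ j = 0) ∨
  (i = 0 ∧ j = 1) ∨ (i = 0 ∧ j = 2) ∨ (i = 0 ∧ j = 3) ∨ (i = 6 ∧ j = 5)

instance : ∀ i j, Decidable (edge7 i j) := fun i j => by unfold edge7; infer_instance

def th7 : ℕ → ℕ → ℕ := fun i j => if i = 0 ∧ (j = 1 ∨ j = 2) then 2 else 1

def att7 (p s : Arg ℕ) : Prop := edge7 p.1 s.1 ∧ th7 p.1 s.1 ≤ p.2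

instance : ∀ p s, Decidable (att7 p s) := fun p s => by unfold att7; infer_instance

open Classical in
noncomputable def R7 : AttFun ℕ := fun T s =>
  if T.Nonempty ∧ ∀ p ∈ T, att7 p s then some 1 else none

lemma R7_pos {T : Set (Arg ℕ)} {s} (h : T.Nonempty ∧ ∀ p ∈ T, att7 p s) :
    R7 T s = some 1 := if_pos h

lemma R7_neg {T : Set (Arg ℕ)} {s} (h : ¬(T.Nonempty ∧ ∀ p ∈ T, att7 p s)) :
    R7 T s = none := if_neg h

lemma R7_some_iff {T : Set (Arg ℕ)} {s n} :
    R7 T s = some n ↔ (T.Nonempty ∧ ∀ p ∈ T, att7 p s) ∧ n = 1 := by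
  unfold R7; split_ifs with h
  · exact ⟨fun he => ⟨h, (Option.some.inj he).symm⟩, fun hc => by rw [hc.2]⟩
  · exact iff_of_false (by simp) (fun hc => h hc.1)

lemma RDef7 {T : Set (Arg ℕ)} {s} : RDef R7 T s ↔ T.Nonempty ∧ ∀ p ∈ T, att7 p s := by
  unfold RDef R7; split_ifs with h
  · exact iff_of_true rfl h
  · exact iff_of_false (by simp) h

lemma R7_single {p s : Arg ℕ} (h : att7 p s) : R7 {p} s = some 1 :=
  R7_pos ⟨⟨p, rfl⟩, by rintro q hq; rw [Set.mem_singleton_iff] at hq; subst hq; exact h⟩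

lemma attacks7 {T : Set (Arg ℕ)} {s} : Attacks R7 T s ↔ ∃ p ∈ T, att7 p s := by
  constructor
  · rintro ⟨T', hT', hdef⟩
    obtain ⟨⟨p, hp⟩, hall⟩ := RDef7.1 hdef
    exact ⟨p, hT' hp, hall p hp⟩
  · rintro ⟨p, hp, hatt⟩
    refine ⟨{p}, Set.singleton_subset_iff.2 hp, ?_⟩
    rw [RDef7]
    exact ⟨⟨p, rfl⟩, by rintro q hq; rw [Set.mem_singleton_iff] at hq; subst hq; exact hatt⟩

open Classical in
lemma vmax7 (T : Set (Arg ℕ)) (s) : Vmax R7 T s = if Attacks R7 T s then 1 else 0 := by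
  unfold Vmax
  split_ifs with h
  · have he : {n | ∃ S₂ ⊆ T, R7 S₂ s = some n} = {1} := by
      ext n
      simp only [Set.mem_setOf_eq, Set.mem_singleton_iff]
      constructor
      · rintro ⟨S₂, _, hS₂⟩; exact (R7_some_iff.1 hS₂).2
      · rintro rfl
        obtain ⟨p, hp, hatt⟩ := attacks7.1 h
        exact ⟨{p}, Set.singleton_subset_iff.2 hp, R7_single hatt⟩
    rw [he, csSup_singleton]
  · have he : {n | ∃ S₂ ⊆ T, R7 S₂ s = some n} = ∅ := by
      ext n
      simp only [Set.mem_setOf_eq, Set.mem_empty_iff_false, iff_false]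
      rintro ⟨S₂, hsub, hS₂⟩
      obtain ⟨⟨⟨p, hp⟩, hall⟩, -⟩ := R7_some_iff.1 hS₂
      exact h (attacks7.2 ⟨p, hsub hp, hall p hp⟩)
    rw [he]
    exact csSup_empty

lemma defeats7 {T : Set (Arg ℕ)} {s} : Defeats R7 T s ↔ Attacks R7 T s ∧ s.2 ≤ 1 := by
  constructor
  · rintro ⟨hatt, S₂, hsub, n, hn, -, hcap⟩
    rw [(R7_some_iff.1 hn).2] at hcap
    exact ⟨hatt, hcap⟩
  · rintro ⟨hatt, hcap⟩
    obtain ⟨p, hp, hpa⟩ := attacks7.1 hatt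
    refine ⟨hatt, {p}, Set.singleton_subset_iff.2 hp, 1, R7_single hpa, ?_, hcap⟩
    intro Sx _ m hm
    rw [(R7_some_iff.1 hm).2]

lemma viewAtt7 {S₁ T : Set (Arg ℕ)} {s} (h : s ∉ S₁) : viewAtt R7 S₁ T s = R7 T s := by
  unfold viewAtt
  rw [if_neg]
  rintro ⟨hs, -, -⟩
  exact h hs

lemma cattacks7_elim {S₁ : Set (Arg ℕ)} {s} (h : CAttacks R7 S₁ s) :
    ∃ p ∈ alpha R7 S₁, att7 p s := by
  obtain ⟨-, S₂, hsub, hdef⟩ := h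
  unfold RDef viewAtt at hdef
  split_ifs at hdef with hdel
  · simp at hdef
  · obtain ⟨⟨p, hp⟩, hall⟩ := RDef7.1 hdef
    exact ⟨p, hsub hp, hall p hp⟩

lemma cdefeats7_elim {S₁ : Set (Arg ℕ)} {s} (h : CDefeats R7 S₁ s) :
    ∃ p ∈ alpha R7 S₁, att7 p s ∧ s.2 ≤ 1 := by
  obtain ⟨-, S₃, hsub, n, hn, hcap⟩ := h
  unfold viewAtt at hn
  split_ifs at hn
  obtain ⟨⟨⟨p, hp⟩, hall⟩, rfl⟩ := R7_some_iff.1 hn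
  exact ⟨p, hsub hp, hall p hp, hcap⟩

lemma cattacks7_intro {S₁ : Set (Arg ℕ)} {s p} (hce : ConfElim R7 S₁) (hns : s ∉ S₁)
    (hp : p ∈ alpha R7 S₁) (hatt : att7 p s) : CAttacks R7 S₁ s := by
  refine ⟨hce, {p}, Set.singleton_subset_iff.2 hp, ?_⟩
  unfold RDef
  rw [viewAtt7 hns, R7_single hatt]
  rfl

lemma cdefeats7_intro {S₁ : Set (Arg ℕ)} {s p} (hce : ConfElim R7 S₁) (hns : s ∉ S₁)
    (hp : p ∈ alpha R7 S₁) (hatt : att7 p s) (hcap : s.2 ≤ 1) : CDefeats R7 S₁ s := by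
  refine ⟨cattacks7_intro hce hns hp hatt, {p}, Set.singleton_subset_iff.2 hp, 1, ?_, hcap⟩
  rw [viewAtt7 hns]
  exact R7_single hatt

lemma edge7_irrefl : ∀ i, ¬ edge7 i i := by intro i h; unfold edge7 at h; omega

lemma isAtt7 : IsAttackStrength R7 := by
  constructor
  · intro s
    exact R7_neg (by rintro ⟨⟨p, hp⟩, -⟩; exact hp)
  · intro S₁ S₂ s h1 hsub hne
    rw [RDef7] at h1 ⊢
    exact ⟨hne, fun p hp => h1.2 p (hsub hp)⟩
  · intro S₁ S₂ s h1 h2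
    rw [RDef7] at h1 h2 ⊢
    refine ⟨h1.1.mono Set.subset_union_left, ?_⟩
    rintro p (hp | hp)
    · exact h1.2 p hp
    · exact h2.2 p hp
  · intro S₁ s n h
    rw [(R7_some_iff.1 h).2]
    exact one_pos
  · intro S₁ s a n m k h hmem hnm
    obtain ⟨⟨-, hall⟩, rfl⟩ := R7_some_iff.1 h
    refine ⟨1, R7_pos ⟨⟨(a, m), Set.mem_union_right _ rfl⟩, ?_⟩, le_refl 1⟩
    rintro p (⟨hp, -⟩ | hp)
    · exact hall p hp
    · rw [Set.mem_singleton_iff] at hp; subst hp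
      have h2 := hall (a, n) hmem
      exact ⟨h2.1, h2.2.trans hnm⟩
  · intro S₁ S₂ s k₁ k₂ k h1 h2 h3
    rw [(R7_some_iff.1 h1).2, (R7_some_iff.1 h2).2, (R7_some_iff.1 h3).2]
    exact ⟨le_refl 1, le_refl 1⟩
  · intro S₁ a n m k h hid hnm
    obtain ⟨⟨hne, hall⟩, rfl⟩ := R7_some_iff.1 h
    exact ⟨1, R7_pos ⟨hne, fun p hp => hall p hp⟩, le_refl 1⟩
  · intro S₁ s hs
    exact R7_neg (by rintro ⟨-, hall⟩; exact edge7_irrefl s.1 (hall s hs).1)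

def Sall : Set (Arg ℕ) := {(0,2),(1,1),(2,1),(3,2),(4,1),(5,1),(6,1)}
def Sa : Set (Arg ℕ) := {(0,2)}
def Sac : Set (Arg ℕ) := {(0,2),(3,2)}
def Sd : Set (Arg ℕ) := {(4,1)}
def Sx5 : Set (Arg ℕ) := {(5,1)}

lemma coh_Sall : Coherent Sall := by
  refine ⟨?_, ?_, ?_⟩
  · unfold Sall
    exact (((((((Set.finite_singleton _).insert _).insert _).insert _).insert _).insert _).insert _)
  · intro p hp
    simp only [Sall, Set.mem_insert_iff, Set.mem_singleton_iff] at hp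
    rcases hp with rfl|rfl|rfl|rfl|rfl|rfl|rfl <;> norm_num
  · intro p hp q hq h
    simp only [Sall, Set.mem_insert_iff, Set.mem_singleton_iff] at hp hq
    rcases hp with rfl|rfl|rfl|rfl|rfl|rfl|rfl <;>
      rcases hq with rfl|rfl|rfl|rfl|rfl|rfl|rfl <;> simp_all

noncomputable def F7 : AF ℕ := ⟨Sall, R7, coh_Sall, isAtt7⟩

end IndepAux
namespace IndepAux
open CoalitionArg

lemma Sa_sub_Sall : Sa ⊆ Sall := by
  rintro p hp; rw [Sa, Set.mem_singleton_iff] at hp; subst hp; simp [Sall]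

lemma Sac_sub_Sall : Sac ⊆ Sall := by
  rintro p hp
  simp only [Sac, Set.mem_insert_iff, Set.mem_singleton_iff] at hp
  rcases hp with rfl | rfl <;> simp [Sall]

lemma Sd_sub_Sall : Sd ⊆ Sall := by
  rintro p hp; rw [Sd, Set.mem_singleton_iff] at hp; subst hp; simp [Sall]

lemma Sx5_sub_Sall : Sx5 ⊆ Sall := by
  rintro p hp; rw [Sx5, Set.mem_singleton_iff] at hp; subst hp; simp [Sall]

lemma not_attacks_single {p s : Arg ℕ} (h : ¬ att7 p s) : ¬ Attacks R7 {p} s := by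
  rw [attacks7]
  rintro ⟨q, hq, hatt⟩
  rw [Set.mem_singleton_iff] at hq; subst hq
  exact h hatt

lemma alpha_Sa : alpha R7 Sa = Sa := by
  have hv : Vmax R7 {((0:ℕ),2)} ((0:ℕ),2) = 0 := by
    rw [vmax7, if_neg (not_attacks_single (by decide))]
  unfold alpha
  rw [show Sa = {((0:ℕ),2)} from rfl, Set.image_singleton, hv]
  norm_num

lemma alpha_Sd : alpha R7 Sd = Sd := by
  have hv : Vmax R7 {((4:ℕ),1)} ((4:ℕ),1) = 0 := by
    rw [vmax7, if_neg (not_attacks_single (by decide))]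
  unfold alpha
  rw [show Sd = {((4:ℕ),1)} from rfl, Set.image_singleton, hv]
  norm_num

lemma alpha_Sx5 : alpha R7 Sx5 = Sx5 := by
  have hv : Vmax R7 {((5:ℕ),1)} ((5:ℕ),1) = 0 := by
    rw [vmax7, if_neg (not_attacks_single (by decide))]
  unfold alpha
  rw [show Sx5 = {((5:ℕ),1)} from rfl, Set.image_singleton, hv]
  norm_num

lemma vmax_Sac_0 : Vmax R7 {((0:ℕ),2),((3:ℕ),2)} ((0:ℕ),2) = 1 := by
  rw [vmax7, if_pos]
  exact attacks7.2 ⟨((3:ℕ),2), by simp, by decide⟩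

lemma vmax_Sac_3 : Vmax R7 {((0:ℕ),2),((3:ℕ),2)} ((3:ℕ),2) = 1 := by
  rw [vmax7, if_pos]
  exact attacks7.2 ⟨((0:ℕ),2), by simp, by decide⟩

lemma alpha_Sac : alpha R7 Sac = {((0:ℕ),1),((3:ℕ),1)} := by
  unfold alpha
  rw [show Sac = insert ((0:ℕ),2) {((3:ℕ),2)} from rfl, Set.image_insert_eq,
    Set.image_singleton, vmax_Sac_0, vmax_Sac_3]
  norm_num

lemma confElim_Sa : ConfElim R7 Sa := by
  intro s hs hd
  rw [Sa, Set.mem_singleton_iff] at hs; subst hs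
  exact absurd (defeats7.1 hd).2 (by norm_num)

lemma confElim_Sac : ConfElim R7 Sac := by
  intro s hs hd
  simp only [Sac, Set.mem_insert_iff, Set.mem_singleton_iff] at hs
  rcases hs with rfl | rfl <;> exact absurd (defeats7.1 hd).2 (by norm_num)

lemma confElim_Sd : ConfElim R7 Sd := by
  intro s hs hd
  rw [Sd, Set.mem_singleton_iff] at hs; subst hs
  exact not_attacks_single (by decide) (defeats7.1 hd).1

lemma confElim_Sx5 : ConfElim R7 Sx5 := by
  intro s hs hd
  rw [Sx5, Set.mem_singleton_iff] at hs; subst hs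
  exact not_attacks_single (by decide) (defeats7.1 hd).1

lemma confElim_empty : ConfElim R7 (∅ : Set (Arg ℕ)) := fun s hs => absurd hs (by simp)

/-- Sac does not c-attack any argument with identifier 1, 2 or 6
(its alpha is {(0,1),(3,1)}, which attacks nothing of those). -/
lemma not_catt_Sac {s : Arg ℕ} (hs : s.1 = 1 ∨ s.1 = 2 ∨ s.1 = 6) :
    ¬ CAttacks R7 Sac s := by
  intro h
  obtain ⟨p, hp, hatt⟩ := cattacks7_elim h
  rw [alpha_Sac] at hp
  simp only [Set.mem_insert_iff, Set.mem_singleton_iff] at hp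
  obtain ⟨he, ht⟩ := hatt
  rcases hp with rfl | rfl <;> unfold edge7 at he <;> unfold th7 at ht <;>
    rcases hs with h1 | h1 | h1 <;> simp [h1] at he ht

lemma not_cdef_Sac {s : Arg ℕ} (hs : s.1 = 1 ∨ s.1 = 2 ∨ s.1 = 6) :
    ¬ CDefeats R7 Sac s := fun h => not_catt_Sac hs h.1

lemma catt_Sa {s : Arg ℕ} (hns : s ∉ Sa) (hatt : att7 ((0:ℕ),2) s) : CAttacks R7 Sa s :=
  cattacks7_intro confElim_Sa hns (by rw [alpha_Sa]; exact rfl) hatt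

lemma cdef_Sa {s : Arg ℕ} (hns : s ∉ Sa) (hatt : att7 ((0:ℕ),2) s) (hcap : s.2 ≤ 1) :
    CDefeats R7 Sa s :=
  cdefeats7_intro confElim_Sa hns (by rw [alpha_Sa]; exact rfl) hatt hcap

end IndepAux
namespace IndepAux
open CoalitionArg

lemma mem_viewArgs_b1 : ((1:ℕ),1) ∈ viewArgs R7 Sall Sac := by
  refine Set.mem_union_left _ ⟨by simp [Sall], ?_⟩
  simp [Sac, Prod.ext_iff]

lemma attacks_b1_a : Attacks R7 {((1:ℕ),1)} ((0:ℕ),2) :=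
  attacks7.2 ⟨((1:ℕ),1), rfl, by decide⟩

lemma rdef_b1_a : RDef R7 {((1:ℕ),1)} ((0:ℕ),2) :=
  RDef7.2 ⟨⟨_, rfl⟩, by rintro q hq; rw [Set.mem_singleton_iff] at hq; subst hq; decide⟩

/-- Part 1: ¬ StateLeq R7 Sall Sa Sac. -/
lemma not_stateleq1 : ¬ StateLeq R7 Sall Sa Sac := by
  rintro ⟨-, -, hcadm | honedir | ⟨-, -, -, hnod⟩⟩
  · -- Sac is not c-admissible: b=(1,1) attacks a=(0,2) and Sac cannot c-defeat b
    obtain ⟨-, h⟩ := hcadm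
    obtain ⟨sx, hsx, hcd⟩ := h {((1:ℕ),1)} (Set.singleton_subset_iff.2 mem_viewArgs_b1)
      ((0:ℕ),2) (by simp [Sac]) attacks_b1_a {((1:ℕ),1)} (le_refl _) rdef_b1_a
    rw [Set.mem_singleton_iff] at hsx; subst hsx
    exact not_cdef_Sac (by norm_num) hcd
  · -- Sa is not one-directionally attacked: any attacker of a is c-attacked by {a}
    obtain ⟨-, Sx, hsub, ⟨s, hs, hatt⟩, hno⟩ := honedir
    rw [Sa, Set.mem_singleton_iff] at hs; subst hs
    obtain ⟨p, hp, hpa⟩ := attacks7.1 hatt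
    refine hno p hp (catt_Sa ?_ ?_)
    · -- p ∉ Sa since att7 p (0,2) gives p.1 ≠ 0
      intro hmem
      rw [Sa, Set.mem_singleton_iff] at hmem; subst hmem
      exact absurd hpa (by decide)
    · -- att7 (0,2) p : p ∈ Sall (or alpha Sa = Sa) and p attacks (0,2) so p.1 ∈ {1,2,3}
      have hpv := hsub hp
      rw [viewArgs, alpha_Sa] at hpv
      have hpS : p ∈ Sall := by
        rcases hpv with ⟨h1, -⟩ | h1
        · exact h1
        · exact Sa_sub_Sall h1
      obtain ⟨he, -⟩ := hpa
      simp only [Sall, Set.mem_insert_iff, Set.mem_singleton_iff] at hpS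
      rcases hpS with rfl|rfl|rfl|rfl|rfl|rfl|rfl <;>
        first
          | decide
          | (exfalso; revert he; decide)
  · -- but Sac IS one-directionally attacked (by b=(1,1))
    apply hnod
    refine ⟨confElim_Sac, {((1:ℕ),1)}, Set.singleton_subset_iff.2 mem_viewArgs_b1,
      ⟨((0:ℕ),2), by simp [Sac], attacks_b1_a⟩, ?_⟩
    rintro sx hsx
    rw [Set.mem_singleton_iff] at hsx; subst hsx
    exact not_catt_Sac (by norm_num)

lemma attacker_Sa : Attacker R7 Sall Sa = {((1:ℕ),1),((2:ℕ),1),((3:ℕ),2)} := by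
  ext s
  simp only [Attacker, Set.mem_setOf_eq]
  constructor
  · rintro ⟨hsS, s₁, hs₁, hatt⟩
    rw [Sa, Set.mem_singleton_iff] at hs₁; subst hs₁
    obtain ⟨p, hp, hpa⟩ := attacks7.1 hatt
    rw [Set.mem_singleton_iff] at hp; subst hp
    simp only [Sall, Set.mem_insert_iff, Set.mem_singleton_iff] at hsS
    simp only [Set.mem_insert_iff, Set.mem_singleton_iff]
    rcases hsS with rfl|rfl|rfl|rfl|rfl|rfl|rfl <;>
      first
        | (exfalso; exact absurd hpa (by decide))
        | simp
  · intro hs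
    simp only [Set.mem_insert_iff, Set.mem_singleton_iff] at hs
    have hmem : s ∈ Sall := by
      rcases hs with rfl|rfl|rfl <;> simp [Sall]
    refine ⟨hmem, ((0:ℕ),2), rfl, attacks7.2 ⟨s, rfl, ?_⟩⟩
    rcases hs with rfl|rfl|rfl <;> decide

lemma undef_Sa_Sa : UndefAtt R7 Sall Sa Sa = {((3:ℕ),2)} := by
  ext s
  simp only [UndefAtt, Set.mem_setOf_eq, attacker_Sa, Set.mem_insert_iff,
    Set.mem_singleton_iff]
  constructor
  · rintro ⟨rfl|rfl|rfl, hncd, -⟩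
    · exact absurd (cdef_Sa (by simp [Sa, Prod.ext_iff]) (by decide) (by norm_num)) hncd
    · exact absurd (cdef_Sa (by simp [Sa, Prod.ext_iff]) (by decide) (by norm_num)) hncd
    · rfl
  · rintro rfl
    refine ⟨by simp, ?_, by simp [Sa]⟩
    intro hcd
    obtain ⟨p, hp, -, hcap⟩ := cdefeats7_elim hcd
    norm_num at hcap
lemma undef_Sa_Sac : UndefAtt R7 Sall Sa Sac = {((1:ℕ),1),((2:ℕ),1)} := by
  ext s
  simp only [UndefAtt, Set.mem_setOf_eq, attacker_Sa, Set.mem_insert_iff,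
    Set.mem_singleton_iff]
  constructor
  · rintro ⟨rfl|rfl|rfl, -, hnm⟩
    · simp
    · simp
    · exact absurd (by simp [Sac]) hnm
  · rintro (rfl|rfl) <;>
      exact ⟨by simp, not_cdef_Sac (by norm_num), by simp [Sac, Prod.ext_iff]⟩

lemma not_fewer1 : ¬ FewerAttackers R7 Sall Sa Sac := by
  unfold FewerAttackers
  rw [undef_Sa_Sa, undef_Sa_Sac, Set.ncard_singleton, Set.ncard_pair (by simp [Prod.ext_iff])]
  norm_num

end IndepAux
namespace IndepAux
open CoalitionArg

/-! Part 2 : Sa vs ∅. -/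

lemma cadm_empty : CAdmissible R7 Sall (∅ : Set (Arg ℕ)) :=
  ⟨confElim_empty, fun _ _ s hs => absurd hs (Set.notMem_empty s)⟩

lemma stateleq2 : StateLeq R7 Sall Sa (∅ : Set (Arg ℕ)) :=
  ⟨confElim_Sa, confElim_empty, Or.inl cadm_empty⟩

lemma not_sub2 : ¬ Sa ⊆ (∅ : Set (Arg ℕ)) :=
  fun h => Set.notMem_empty _ (h rfl)

lemma alpha_empty : alpha R7 (∅ : Set (Arg ℕ)) = ∅ := Set.image_empty _

lemma not_cdef_empty (s : Arg ℕ) : ¬ CDefeats R7 (∅ : Set (Arg ℕ)) s := by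
  intro h
  obtain ⟨p, hp, -⟩ := cdefeats7_elim h
  rw [alpha_empty] at hp
  exact Set.notMem_empty _ hp

lemma undef_Sa_empty : UndefAtt R7 Sall Sa (∅ : Set (Arg ℕ)) = Attacker R7 Sall Sa := by
  ext s
  simp only [UndefAtt, Set.mem_setOf_eq]
  exact ⟨fun h => h.1, fun h => ⟨h, not_cdef_empty s, Set.notMem_empty s⟩⟩

lemma not_fewer2 : ¬ FewerAttackers R7 Sall Sa (∅ : Set (Arg ℕ)) := by
  unfold FewerAttackers
  rw [undef_Sa_empty, undef_Sa_Sa, attacker_Sa, Set.ncard_singleton]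
  rw [Set.ncard_insert_of_notMem (by simp [Prod.ext_iff])
    (Set.Finite.insert _ (Set.finite_singleton _)),
    Set.ncard_pair (by simp [Prod.ext_iff])]
  norm_num

/-! Part 3 : Sd vs Sx5. -/

lemma no_att_4 (T : Set (Arg ℕ)) : ¬ Attacks R7 T ((4:ℕ),1) := by
  intro h
  obtain ⟨p, -, hpa⟩ := attacks7.1 h
  have := hpa.1
  unfold edge7 at this
  omega

lemma attacker_Sd : Attacker R7 Sall Sd = ∅ := by
  ext s
  simp only [Attacker, Set.mem_setOf_eq, Set.mem_empty_iff_false, iff_false]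
  rintro ⟨-, s₁, hs₁, hatt⟩
  rw [Sd, Set.mem_singleton_iff] at hs₁; subst hs₁
  exact no_att_4 _ hatt

lemma undef_Sd (T : Set (Arg ℕ)) : UndefAtt R7 Sall Sd T = ∅ := by
  ext s
  simp only [UndefAtt, Set.mem_setOf_eq, Set.mem_empty_iff_false, iff_false]
  rintro ⟨h, -⟩
  rw [attacker_Sd] at h
  exact Set.notMem_empty _ h

lemma fewer3 : FewerAttackers R7 Sall Sd Sx5 := by
  unfold FewerAttackers
  rw [undef_Sd, undef_Sd]

lemma not_sub3 : ¬ Sd ⊆ Sx5 := by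
  intro h
  have := h rfl
  rw [Sx5, Set.mem_singleton_iff, Prod.ext_iff] at this
  exact absurd this.1 (by norm_num)

lemma cadm_Sd : CAdmissible R7 Sall Sd := by
  refine ⟨confElim_Sd, ?_⟩
  intro S₂ _ s hs hatt
  rw [Sd, Set.mem_singleton_iff] at hs; subst hs
  exact absurd hatt (no_att_4 _)

lemma mem_viewArgs_y : ((6:ℕ),1) ∈ viewArgs R7 Sall Sx5 := by
  refine Set.mem_union_left _ ⟨by simp [Sall], ?_⟩
  simp [Sx5, Prod.ext_iff]

lemma attacks_y_x : Attacks R7 {((6:ℕ),1)} ((5:ℕ),1) :=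
  attacks7.2 ⟨((6:ℕ),1), rfl, by decide⟩

lemma rdef_y_x : RDef R7 {((6:ℕ),1)} ((5:ℕ),1) :=
  RDef7.2 ⟨⟨_, rfl⟩, by rintro q hq; rw [Set.mem_singleton_iff] at hq; subst hq; decide⟩

lemma not_cdef_Sx5_y : ¬ CDefeats R7 Sx5 ((6:ℕ),1) := by
  intro h
  obtain ⟨p, hp, hatt, -⟩ := cdefeats7_elim h
  rw [alpha_Sx5, Sx5, Set.mem_singleton_iff] at hp; subst hp
  exact absurd hatt (by decide)

lemma not_stateleq3 : ¬ StateLeq R7 Sall Sd Sx5 := by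
  rintro ⟨-, -, hcadm | honedir | ⟨hna, -, -, -⟩⟩
  · obtain ⟨-, h⟩ := hcadm
    obtain ⟨sx, hsx, hcd⟩ := h {((6:ℕ),1)} (Set.singleton_subset_iff.2 mem_viewArgs_y)
      ((5:ℕ),1) rfl attacks_y_x {((6:ℕ),1)} (le_refl _) rdef_y_x
    rw [Set.mem_singleton_iff] at hsx; subst hsx
    exact not_cdef_Sx5_y hcd
  · obtain ⟨-, Sx, -, ⟨s, hs, hatt⟩, -⟩ := honedir
    rw [Sd, Set.mem_singleton_iff] at hs; subst hs
    exact no_att_4 _ hatt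
  · exact hna cadm_Sd

end IndepAux
open CoalitionArg in
/-- Independence of the three profitability axioms. -/
theorem profitability_axioms_independent :
    (∃ (A : Type) (F : AF A) (S₁ S₂ : Set (Arg A)),
      S₁ ⊆ F.args ∧ S₂ ⊆ F.args ∧ ConfElim F.att S₁ ∧ ConfElim F.att S₂ ∧
      S₁ ⊆ S₂ ∧ ¬ StateLeq F.att F.args S₁ S₂ ∧
      ¬ FewerAttackers F.att F.args S₁ S₂) ∧
    (∃ (A : Type) (F : AF A) (S₁ S₂ : Set (Arg A)),
      S₁ ⊆ F.args ∧ S₂ ⊆ F.args ∧ ConfElim F.att S₁ ∧ ConfElim F.att S₂ ∧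
      StateLeq F.att F.args S₁ S₂ ∧ ¬ S₁ ⊆ S₂ ∧
      ¬ FewerAttackers F.att F.args S₁ S₂) ∧
    (∃ (A : Type) (F : AF A) (S₁ S₂ : Set (Arg A)),
      S₁ ⊆ F.args ∧ S₂ ⊆ F.args ∧ ConfElim F.att S₁ ∧ ConfElim F.att S₂ ∧
      FewerAttackers F.att F.args S₁ S₂ ∧ ¬ S₁ ⊆ S₂ ∧
      ¬ StateLeq F.att F.args S₁ S₂) := by
  refine ⟨⟨ℕ, IndepAux.F7, IndepAux.Sa, IndepAux.Sac, IndepAux.Sa_sub_Sall,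
      IndepAux.Sac_sub_Sall, IndepAux.confElim_Sa, IndepAux.confElim_Sac,
      ?_, IndepAux.not_stateleq1, IndepAux.not_fewer1⟩,
    ⟨ℕ, IndepAux.F7, IndepAux.Sa, ∅, IndepAux.Sa_sub_Sall, Set.empty_subset _,
      IndepAux.confElim_Sa, IndepAux.confElim_empty, IndepAux.stateleq2,
      IndepAux.not_sub2, IndepAux.not_fewer2⟩,
    ⟨ℕ, IndepAux.F7, IndepAux.Sd, IndepAux.Sx5, IndepAux.Sd_sub_Sall,
      IndepAux.Sx5_sub_Sall, IndepAux.confElim_Sd, IndepAux.confElim_Sx5,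
      IndepAux.fewer3, IndepAux.not_sub3, IndepAux.not_stateleq3⟩⟩
  rintro p hp
  rw [IndepAux.Sa, Set.mem_singleton_iff] at hp; subst hp
  simp [IndepAux.Sac]
end

section
/- Let (S,R) be an argumentation framework, let S₁ ⊆ S be such that α(S₁) is defined, and let S_x ⊆ S be a c-admissible set with S₁ ⊂ S_x. Then: (1) α is defined for S₂ = S_x ∖ S₁; (2) coalition is permitted between S₁ and S₂; (3) S₁ ⊴ S_x. -/
open CoalitionArg in
private lemma defeats_mono' {A : Type*} {R : AttFun A} {T U : Set (Arg A)} {s : Arg A}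
    (hTU : T ⊆ U) (hU : U.Finite) (h : Defeats R T s) : Defeats R U s := by
  obtain ⟨⟨S₂, hS₂, hdef⟩, St, hSt, n, hn, _, hcap⟩ := h
  set V : Set ℕ := {m | ∃ S' ⊆ U, R S' s = some m} with hVdef
  have hVfin : V.Finite := by
    have hsub : V ⊆ (fun S' => (R S' s).getD 0) '' {T' | T' ⊆ U} := by
      rintro m ⟨S', hS', hm⟩
      exact ⟨S', hS', by simp [hm]⟩
    exact ((hU.finite_subsets).image _).subset hsub
  have hnV : n ∈ V := ⟨St, hSt.trans hTU, hn⟩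
  obtain ⟨nmax, hmem, hmaxU⟩ := Set.Finite.exists_maximalFor id V hVfin ⟨n, hnV⟩
  have hle : ∀ m ∈ V, m ≤ nmax := fun m hm =>
    le_of_not_gt fun hlt => absurd (hmaxU hm hlt.le) (not_le_of_gt hlt)
  obtain ⟨S', hS'U, hS'⟩ := hmem
  refine ⟨⟨S₂, hS₂.trans hTU, hdef⟩, S', hS'U, nmax, hS',
    fun Sy hSy m hm => hle m ⟨Sy, hSy, hm⟩, hcap.trans (hle n hnV)⟩

open CoalitionArg in
private lemma undefAtt_empty {A : Type*} (F : AF A)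
    (S₁ Sx : Set (Arg A)) (hadm : CAdmissible F.att F.args Sx) (hss : S₁ ⊆ Sx) :
    UndefAtt F.att F.args S₁ Sx = ∅ := by
  ext s
  simp only [Set.mem_empty_iff_false, iff_false]
  rintro ⟨⟨hsS, s₁, hs₁, S₂, hS₂, hdef⟩, hncd, hns⟩
  have hne : S₂.Nonempty := by
    rcases Set.eq_empty_or_nonempty S₂ with h | h
    · rw [h] at hdef
      simp [RDef, F.isAtt.empty_undef] at hdef
    · exact h
  have hS₂eq : S₂ = {s} := (Set.Nonempty.subset_singleton_iff hne).mp hS₂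
  subst hS₂eq
  have hmem : ({s} : Set (Arg A)) ⊆ viewArgs F.att F.args Sx := by
    intro x hx; rw [Set.mem_singleton_iff] at hx; subst hx
    exact Or.inl ⟨hsS, hns⟩
  obtain ⟨sx, hsx, hcd⟩ := hadm.2 {s} hmem s₁ (hss hs₁)
    ⟨{s}, subset_rfl, hdef⟩ {s} subset_rfl hdef
  rw [Set.mem_singleton_iff] at hsx
  subst hsx
  exact hncd hcd

open CoalitionArg in
/-- A conflict-eliminable set profits from any c-admissible strict superset. -/
theorem profitable_of_cadmissible_superset {A : Type*} (F : AF A)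
    (S₁ Sx : Set (Arg A)) (hS₁ : S₁ ⊆ F.args) (hce : ConfElim F.att S₁)
    (hSx : Sx ⊆ F.args) (hadm : CAdmissible F.att F.args Sx) (hss : S₁ ⊂ Sx) :
    ConfElim F.att (Sx \ S₁) ∧
    CoalitionPermitted F.att S₁ (Sx \ S₁) ∧
    Profitable F.att F.args S₁ Sx := by
  have hSxfin : Sx.Finite := F.coherent.1.subset hSx
  have hceSx : ConfElim F.att Sx := hadm.1
  have hund := undefAtt_empty F S₁ Sx hadm hss.subset
  refine ⟨?_, ⟨?_, ?_⟩, hss.subset, ⟨hce, hceSx, Or.inl hadm⟩, ?_⟩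
  · intro s hs hd
    exact hceSx s hs.1 (defeats_mono' Set.diff_subset hSxfin hd)
  · ext x; simp
  · rwa [Set.union_diff_cancel hss.subset]
  · unfold FewerAttackers
    rw [hund]
    simp
end

section
/- Existence theorem: Let (S,R) be an argumentation framework and S₁ ⊆ S. If there exists S₂ ⊆ S such that coalition is permitted between S₁ and S₂, S₁ ⊴ S₁ ∪ S₂, and S₁ ∪ S₂ is c-admissible, then there exists S₃ ⊆ S such that coalition is permitted between S₁ and S₃, S₁ ⊴ S₁ ∪ S₃, S₁ ∪ S₃ is c-preferred, and S₂ ⊆ S₃. -/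
open CoalitionArg in
/-- Existence theorem. -/
theorem existence_theorem {A : Type*} (F : AF A)
    (S₁ : Set (Arg A)) (hS₁ : S₁ ⊆ F.args) :
    ∀ S₂ ⊆ F.args,
      CoalitionPermitted F.att S₁ S₂ →
      Profitable F.att F.args S₁ (S₁ ∪ S₂) →
      CAdmissible F.att F.args (S₁ ∪ S₂) →
      ∃ S₃ ⊆ F.args,
        CoalitionPermitted F.att S₁ S₃ ∧
        Profitable F.att F.args S₁ (S₁ ∪ S₃) ∧
        CPreferred F.att F.args (S₁ ∪ S₃) ∧
        S₂ ⊆ S₃ := by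
  intro S₂ hS₂ hCP hProf hAdm
  have hfin : F.args.Finite := F.coherent.1
  set S := F.args with hSdef
  set R := F.att with hRdef
  set Fam : Set (Set (Arg A)) :=
    {T | S₁ ∪ S₂ ⊆ T ∧ T ⊆ S ∧ CAdmissible R S T} with hFamdef
  have hFamFin : Fam.Finite :=
    hfin.finite_subsets.subset (fun T hT => hT.2.1)
  have hFamNe : Fam.Nonempty :=
    ⟨S₁ ∪ S₂, subset_rfl, Set.union_subset hS₁ hS₂, hAdm⟩
  obtain ⟨Sy, hSyF, hmax⟩ : ∃ a ∈ Fam, ∀ a' ∈ Fam, id a ≤ id a' → id a = id a' := by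
    obtain ⟨a, ha, h⟩ := Set.Finite.exists_maximalFor id Fam hFamFin hFamNe
    exact ⟨a, ha, fun b hb hab => le_antisymm hab (h hb hab)⟩
  obtain ⟨hsub, hSyS, hSyAdm⟩ := hSyF
  have hS₁Sy : S₁ ⊆ Sy := (Set.subset_union_left).trans hsub
  have hS₂Sy : S₂ ⊆ Sy := (Set.subset_union_right).trans hsub
  have hUnion : S₁ ∪ (Sy \ S₁) = Sy := Set.union_diff_cancel hS₁Sy
  -- every attacker of S₁ outside Sy is c-defeated by Sy
  have hUndef : UndefAtt R S S₁ Sy = ∅ := by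
    ext s'
    simp only [Set.mem_empty_iff_false, iff_false]
    rintro ⟨⟨hs'S, s₁, hs₁, T, hTsub, hTdef⟩, hnotdef, hnotin⟩
    have hview : ({s'} : Set (Arg A)) ⊆ viewArgs R S Sy := by
      intro x hx
      rw [Set.mem_singleton_iff] at hx
      subst hx
      exact Or.inl ⟨hs'S, hnotin⟩
    obtain ⟨sx, hsx, hcd⟩ :=
      hSyAdm.2 {s'} hview s₁ (hS₁Sy hs₁) ⟨T, hTsub, hTdef⟩ T hTsub hTdef
    have : sx = s' := hTsub hsx
    exact hnotdef (this ▸ hcd)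
  refine ⟨Sy \ S₁, Set.diff_subset.trans hSyS, ?_, ?_, ?_, ?_⟩
  · refine ⟨?_, ?_⟩
    · ext x
      simp only [Set.mem_inter_iff, Set.mem_diff, Set.mem_empty_iff_false, iff_false]
      rintro ⟨hx1, _, hx2⟩
      exact hx2 hx1
    · rw [hUnion]; exact hSyAdm.1
  · rw [hUnion]
    refine ⟨hS₁Sy, ⟨hProf.2.1.1, hSyAdm.1, Or.inl hSyAdm⟩, ?_⟩
    unfold FewerAttackers
    rw [hUndef, Set.ncard_empty]
    exact Nat.zero_le _
  · rw [hUnion]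
    refine ⟨hSyAdm, ?_⟩
    rintro ⟨Sz, hss, hzS, hzAdm⟩
    have hzF : Sz ∈ Fam := ⟨hsub.trans hss.subset, hzS, hzAdm⟩
    exact hss.ne (hmax Sz hzF hss.subset)
  · intro x hx
    refine ⟨hS₂Sy hx, fun hx1 => ?_⟩
    have : x ∈ S₁ ∩ S₂ := ⟨hx1, hx⟩
    rw [hCP.1] at this
    exact this
end

section
/- Asymmetry of profitabilities: There exists an argumentation framework (S,R) and disjoint subsets S₁, S₂ of S such that S₁ ⊴ S₁ ∪ S₂ holds but S₂ ⊴ S₁ ∪ S₂ does not hold. -/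
open CoalitionArg

open Classical in
/-- The example attack-strength function: nonempty sets of arguments all with
identifier 1 attack any argument with identifier 0, with strength cap+1. -/
noncomputable def Rex : AttFun ℕ := fun T s =>
  if T.Nonempty ∧ (∀ p ∈ T, p.1 = 1) ∧ s.1 = 0 then some (s.2 + 1) else none

lemma Rex_eq_some {T : Set (Arg ℕ)} {s : Arg ℕ} {k : ℕ} (h : Rex T s = some k) :
    T.Nonempty ∧ (∀ p ∈ T, p.1 = 1) ∧ s.1 = 0 ∧ k = s.2 + 1 := by
  unfold Rex at h
  split at h
  · rename_i hc
    exact ⟨hc.1, hc.2.1, hc.2.2, (Option.some.inj h).symm⟩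
  · simp at h

lemma Rex_eq_some' {T : Set (Arg ℕ)} {s : Arg ℕ}
    (h1 : T.Nonempty) (h2 : ∀ p ∈ T, p.1 = 1) (h3 : s.1 = 0) :
    Rex T s = some (s.2 + 1) := by
  unfold Rex; rw [if_pos ⟨h1, h2, h3⟩]

lemma Rex_rdef {T : Set (Arg ℕ)} {s : Arg ℕ} (h : RDef Rex T s) :
    T.Nonempty ∧ (∀ p ∈ T, p.1 = 1) ∧ s.1 = 0 := by
  obtain ⟨k, hk⟩ := Option.isSome_iff_exists.mp h
  have := Rex_eq_some hk
  exact ⟨this.1, this.2.1, this.2.2.1⟩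

lemma Rex_rdef' {T : Set (Arg ℕ)} {s : Arg ℕ}
    (h1 : T.Nonempty) (h2 : ∀ p ∈ T, p.1 = 1) (h3 : s.1 = 0) : RDef Rex T s := by
  unfold RDef; rw [Rex_eq_some' h1 h2 h3]; rfl

lemma Rex_attacks {X : Set (Arg ℕ)} {s : Arg ℕ} (h : Attacks Rex X s) :
    s.1 = 0 ∧ ∃ p ∈ X, p.1 = 1 := by
  obtain ⟨S', hsub, hdef⟩ := h
  obtain ⟨⟨x, hx⟩, h1, h0⟩ := Rex_rdef hdef
  exact ⟨h0, x, hsub hx, h1 x hx⟩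

lemma viewAtt_rdef {X T : Set (Arg ℕ)} {s : Arg ℕ}
    (h : RDef (viewAtt Rex X) T s) : RDef Rex T s := by
  unfold RDef viewAtt at *
  split at h
  · simp at h
  · exact h

lemma no_cattacks {X : Set (Arg ℕ)} {s : Arg ℕ} (h : s.1 ≠ 0) :
    ¬ CAttacks Rex X s := by
  rintro ⟨_, S', _, hdef⟩
  exact h (Rex_rdef (viewAtt_rdef hdef)).2.2

lemma no_cdefeats {X : Set (Arg ℕ)} {s : Arg ℕ} (h : s.1 ≠ 0) :
    ¬ CDefeats Rex X s := fun hc => no_cattacks h hc.1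

lemma confelim_of {X : Set (Arg ℕ)} (hall : ∀ p ∈ X, p.1 ≠ 1) :
    ConfElim Rex X := by
  intro s _ hdf
  obtain ⟨_, p, hp, hp1⟩ := Rex_attacks hdf.1
  exact hall p hp hp1

lemma Rex_isAtt : IsAttackStrength Rex := by
  constructor
  · intro s
    unfold Rex; rw [if_neg]; rintro ⟨⟨x, hx⟩, -⟩; exact hx
  · intro T1 T2 s h hsub hne
    obtain ⟨_, h1, h0⟩ := Rex_rdef h
    exact Rex_rdef' hne (fun p hp => h1 p (hsub hp)) h0
  · intro T1 T2 s h1 h2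
    obtain ⟨hne, ha, h0⟩ := Rex_rdef h1
    obtain ⟨_, hb, _⟩ := Rex_rdef h2
    refine Rex_rdef' (hne.mono Set.subset_union_left) ?_ h0
    rintro p (hp | hp); exacts [ha p hp, hb p hp]
  · intro T s n h
    have := Rex_eq_some h
    omega
  · intro T s a n m k h hmem _
    obtain ⟨_, h1, h0, hk⟩ := Rex_eq_some h
    have ha : a = 1 := h1 _ hmem
    refine ⟨s.2 + 1, Rex_eq_some' ⟨(a, m), Or.inr rfl⟩ ?_ h0, by omega⟩
    rintro p (⟨hp, -⟩ | hp)
    · exact h1 p hp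
    · rw [hp]; exact ha
  · intro T1 T2 s k1 k2 k h1 h2 h
    have e1 := Rex_eq_some h1
    have e2 := Rex_eq_some h2
    have e := Rex_eq_some h
    omega
  · intro T a n m k h _ hnm
    obtain ⟨hne, h1, h0, hk⟩ := Rex_eq_some h
    exact ⟨m + 1, Rex_eq_some' hne h1 h0, by simp at hk ⊢; omega⟩
  · intro T s hs
    unfold Rex; rw [if_neg]
    rintro ⟨-, h1, h0⟩
    have := h1 s hs
    omega

/-- The example framework: a = (0,1), b = (1,1), c = (2,1). -/
noncomputable def Fex : AF ℕ where
  args := {((0:ℕ), 1), ((1:ℕ), 1), ((2:ℕ), 1)}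
  att := Rex
  coherent := by
    refine ⟨(Set.finite_singleton _).insert _ |>.insert _, ?_, ?_⟩
    · rintro p (rfl | rfl | rfl) <;> norm_num
    · rintro p (rfl | rfl | rfl) q (rfl | rfl | rfl) <;> simp
  isAtt := Rex_isAtt

open CoalitionArg in
/-- Asymmetry of profitabilities. -/
theorem profitability_asymmetry :
    ∃ (A : Type) (F : AF A) (S₁ S₂ : Set (Arg A)),
      S₁ ⊆ F.args ∧ S₂ ⊆ F.args ∧ S₁ ∩ S₂ = ∅ ∧
      Profitable F.att F.args S₁ (S₁ ∪ S₂) ∧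
      ¬ Profitable F.att F.args S₂ (S₁ ∪ S₂) := by
  have hargs : Fex.args = {((0:ℕ), 1), ((1:ℕ), 1), ((2:ℕ), 1)} := rfl
  have hatt : Fex.att = Rex := rfl
  refine ⟨ℕ, Fex, {((0:ℕ), 1)}, {((2:ℕ), 1)}, ?_, ?_, ?_, ?_, ?_⟩
  · rw [hargs]; simp
  · rw [hargs]; simp
  · ext p
    constructor
    · rintro ⟨rfl, h⟩
      exact absurd h (by simp [Prod.ext_iff])
    · exact fun h => h.elim
  all_goals rw [hatt, hargs]
  -- basic facts
  · -- Profitable Rex args {a} ({a} ∪ {c})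
    have ce1 : ConfElim Rex {((0:ℕ), 1)} :=
      confelim_of (by rintro p rfl; norm_num)
    have ceT : ConfElim Rex ({((0:ℕ), 1)} ∪ {((2:ℕ), 1)}) :=
      confelim_of (by rintro p (rfl | rfl) <;> norm_num)
    have hbmem : ((1:ℕ), 1) ∈ viewArgs Rex
        ({((0:ℕ), 1), ((1:ℕ), 1), ((2:ℕ), 1)} : Set (Arg ℕ)) {((0:ℕ), 1)} :=
      Or.inl ⟨by simp, by simp [Prod.ext_iff]⟩
    have hatk : Attacks Rex {((1:ℕ), 1)} ((0:ℕ), 1) :=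
      ⟨{((1:ℕ), 1)}, subset_rfl,
        Rex_rdef' ⟨_, rfl⟩ (by rintro p rfl; rfl) rfl⟩
    have hod : OneDirAttacked Rex
        ({((0:ℕ), 1), ((1:ℕ), 1), ((2:ℕ), 1)} : Set (Arg ℕ)) {((0:ℕ), 1)} := by
      refine ⟨ce1, {((1:ℕ), 1)}, ?_, ⟨((0:ℕ), 1), rfl, hatk⟩, ?_⟩
      · rintro p rfl; exact hbmem
      · rintro sx rfl
        exact no_cattacks one_ne_zero
    refine ⟨Set.subset_union_left, ⟨ce1, ceT, Or.inr (Or.inl hod)⟩, ?_⟩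
    -- FewerAttackers
    have hattacker : ∀ s, s ∈ Attacker Rex
        ({((0:ℕ), 1), ((1:ℕ), 1), ((2:ℕ), 1)} : Set (Arg ℕ)) {((0:ℕ), 1)} →
        s = ((1:ℕ), 1) := by
      rintro s ⟨hs, s₁, -, hat⟩
      obtain ⟨-, p, hp, hp1⟩ := Rex_attacks hat
      rw [Set.mem_singleton_iff] at hp; subst hp
      rcases hs with rfl | rfl | rfl <;> simp_all
    have heq : UndefAtt Rex ({((0:ℕ), 1), ((1:ℕ), 1), ((2:ℕ), 1)} : Set (Arg ℕ))
        {((0:ℕ), 1)} ({((0:ℕ), 1)} ∪ {((2:ℕ), 1)}) =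
        UndefAtt Rex ({((0:ℕ), 1), ((1:ℕ), 1), ((2:ℕ), 1)} : Set (Arg ℕ))
        {((0:ℕ), 1)} {((0:ℕ), 1)} := by
      ext s
      constructor <;> rintro ⟨hA, -, -⟩ <;>
        · have hb := hattacker s hA
          subst hb
          exact ⟨hA, no_cdefeats one_ne_zero, by simp [Prod.ext_iff]⟩
    unfold FewerAttackers
    rw [heq]
  · -- ¬ Profitable Rex args {c} ({a} ∪ {c})
    have hnc : ¬ CAdmissible Rex
        ({((0:ℕ), 1), ((1:ℕ), 1), ((2:ℕ), 1)} : Set (Arg ℕ))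
        ({((0:ℕ), 1)} ∪ {((2:ℕ), 1)}) := by
      rintro ⟨-, h⟩
      obtain ⟨sx, hsx, hcd⟩ := h {((1:ℕ), 1)}
        (by rintro p rfl; exact Or.inl ⟨by simp, by simp [Prod.ext_iff]⟩)
        ((0:ℕ), 1) (Or.inl rfl)
        ⟨{((1:ℕ), 1)}, subset_rfl,
          Rex_rdef' ⟨_, rfl⟩ (by rintro p rfl; rfl) rfl⟩
        {((1:ℕ), 1)} subset_rfl
        (Rex_rdef' ⟨_, rfl⟩ (by rintro p rfl; rfl) rfl)
      rw [Set.mem_singleton_iff] at hsx; subst hsx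
      exact no_cdefeats one_ne_zero hcd
    have hca2 : CAdmissible Rex
        ({((0:ℕ), 1), ((1:ℕ), 1), ((2:ℕ), 1)} : Set (Arg ℕ)) {((2:ℕ), 1)} := by
      refine ⟨confelim_of (by rintro p rfl; norm_num), ?_⟩
      intro S' _ s hs hat Sx _ _
      rw [Set.mem_singleton_iff] at hs; subst hs
      exact absurd (Rex_attacks hat).1 (by norm_num)
    have hno2 : ¬ OneDirAttacked Rex
        ({((0:ℕ), 1), ((1:ℕ), 1), ((2:ℕ), 1)} : Set (Arg ℕ)) {((2:ℕ), 1)} := by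
      rintro ⟨-, Sx, -, ⟨s, hs, hat⟩, -⟩
      rw [Set.mem_singleton_iff] at hs; subst hs
      exact absurd (Rex_attacks hat).1 (by norm_num)
    rintro ⟨-, ⟨-, -, h | h | ⟨h, -⟩⟩, -⟩
    exacts [hnc h, hno2 h, h hca2]
end
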